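/- Let P be a finite nonempty subset of the Euclidean space ℝ^d, let p*, q* ∈ P be a diametrical pair of P (dist(p*, q*) = diam(P)), let W be a linear subspace of ℝ^d with orthogonal projection π_W, and let ε ≥ 0. Suppose there is a nonzero vector w ∈ W such that the angle between q* − p* and w is at most √(2ε). Then (1 − ε)·diam(P) ≤ diam(π_W(P)) ≤ diam(P). -/

import Mathlib

open scoped RealInnerProductSpace

theorem projection_onto_subspace_approximates_diameter
    (d : ℕ) (P : Finset (EuclideanSpace ℝ (Fin d))) (hP : P.Nonempty)
    (pstar qstar : EuclideanSpace ℝ (Fin d)) (hp : pstar ∈ P) (hq : qstar ∈ P)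
    (hdiam : dist pstar qstar = Metric.diam (↑P : Set (EuclideanSpace ℝ (Fin d))))
    (W : Submodule ℝ (EuclideanSpace ℝ (Fin d)))
    (ε : ℝ) (hε : 0 ≤ ε)
    (w : EuclideanSpace ℝ (Fin d)) (hwW : w ∈ W) (hw0 : w ≠ 0)
    (hangle : InnerProductGeometry.angle (qstar - pstar) w ≤ Real.sqrt (2 * ε)) :
    (1 - ε) * Metric.diam (↑P : Set (EuclideanSpace ℝ (Fin d))) ≤
        Metric.diam
          ((fun p => ((Submodule.orthogonalProjectionOnto W p : W) : EuclideanSpace ℝ (Fin d))) ''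
            (↑P : Set (EuclideanSpace ℝ (Fin d)))) ∧
      Metric.diam
          ((fun p => ((Submodule.orthogonalProjectionOnto W p : W) : EuclideanSpace ℝ (Fin d))) ''
            (↑P : Set (EuclideanSpace ℝ (Fin d)))) ≤
        Metric.diam (↑P : Set (EuclideanSpace ℝ (Fin d))) := by
  set f : EuclideanSpace ℝ (Fin d) → EuclideanSpace ℝ (Fin d) :=
    fun p => ((Submodule.orthogonalProjectionOnto W p : W) : EuclideanSpace ℝ (Fin d)) with hf
  have hlip : LipschitzWith 1 f := by
    apply LipschitzWith.of_dist_le_mul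
    intro x y
    simp only [dist_eq_norm, hf, NNReal.coe_one, one_mul]
    have h1 : (↑(Submodule.orthogonalProjectionOnto W x) : EuclideanSpace ℝ (Fin d))
        - ↑(Submodule.orthogonalProjectionOnto W y) = ↑(Submodule.orthogonalProjectionOnto W (x - y)) := by
      rw [map_sub]; rfl
    rw [h1]
    calc ‖(↑(Submodule.orthogonalProjectionOnto W (x - y)) : EuclideanSpace ℝ (Fin d))‖
        = ‖Submodule.orthogonalProjectionOnto W (x - y)‖ := rfl
      _ ≤ ‖Submodule.orthogonalProjectionOnto W‖ * ‖x - y‖ := (Submodule.orthogonalProjectionOnto W).le_opNorm _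
      _ ≤ 1 * ‖x - y‖ :=
          mul_le_mul_of_nonneg_right (Submodule.orthogonalProjectionOnto_norm_le W) (norm_nonneg _)
      _ = ‖x - y‖ := one_mul _
  have hPb : Bornology.IsBounded (↑P : Set (EuclideanSpace ℝ (Fin d))) :=
    P.finite_toSet.isBounded
  have hub : Metric.diam (f '' ↑P) ≤
      Metric.diam (↑P : Set (EuclideanSpace ℝ (Fin d))) := by
    have := hlip.diam_image_le (↑P : Set (EuclideanSpace ℝ (Fin d))) hPb
    simpa using this
  refine ⟨?_, hub⟩
  rcases le_or_gt (1 - ε) 0 with h1 | h1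
  · exact le_trans (mul_nonpos_of_nonpos_of_nonneg h1 Metric.diam_nonneg)
      Metric.diam_nonneg
  rcases eq_or_ne qstar pstar with hvq | hvq
  · have hz : Metric.diam (↑P : Set (EuclideanSpace ℝ (Fin d))) = 0 := by
      rw [← hdiam, hvq, dist_self]
    rw [hz, mul_zero]
    exact Metric.diam_nonneg
  set v : EuclideanSpace ℝ (Fin d) := qstar - pstar with hv
  have hv0 : v ≠ 0 := sub_ne_zero.mpr hvq
  set α := InnerProductGeometry.angle v w with hα
  have hα0 : 0 ≤ α := InnerProductGeometry.angle_nonneg _ _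
  have hcos : 1 - ε ≤ Real.cos α := by
    have hsq : α ^ 2 ≤ 2 * ε := by
      have h2 := pow_le_pow_left₀ hα0 hangle 2
      rwa [Real.sq_sqrt (by linarith : (0:ℝ) ≤ 2 * ε)] at h2
    have := Real.one_sub_sq_div_two_le_cos (x := α)
    linarith
  have hwn : (0:ℝ) < ‖w‖ := norm_pos_iff.mpr hw0
  have hvn : (0:ℝ) < ‖v‖ := norm_pos_iff.mpr hv0
  have hinner : ⟪v, w⟫ = ‖v‖ * ‖w‖ * Real.cos α := by
    rw [hα, InnerProductGeometry.cos_angle]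
    field_simp
  have hπ : (1 - ε) * ‖v‖ ≤ ‖(↑(Submodule.orthogonalProjectionOnto W v) : EuclideanSpace ℝ (Fin d))‖ := by
    set u : EuclideanSpace ℝ (Fin d) := ‖w‖⁻¹ • w with hu
    have hun : ‖u‖ = 1 := by
      rw [hu, norm_smul, norm_inv, norm_norm, inv_mul_cancel₀ hwn.ne']
    have huW : u ∈ W := W.smul_mem _ hwW
    have hperp : ⟪v - ↑(Submodule.orthogonalProjectionOnto W v), u⟫ = 0 := by
      rw [real_inner_comm]
      exact (Submodule.sub_starProjection_mem_orthogonal (K := W) v) u huW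
    have heq : ⟪(↑(Submodule.orthogonalProjectionOnto W v) : EuclideanSpace ℝ (Fin d)), u⟫ = ⟪v, u⟫ := by
      have h3 := inner_sub_left (𝕜 := ℝ) v
        (↑(Submodule.orthogonalProjectionOnto W v) : EuclideanSpace ℝ (Fin d)) u
      rw [hperp] at h3
      linarith
    have hvu : ⟪v, u⟫ = ‖v‖ * Real.cos α := by
      rw [hu, real_inner_smul_right, hinner]
      field_simp
    have hle : ⟪(↑(Submodule.orthogonalProjectionOnto W v) : EuclideanSpace ℝ (Fin d)), u⟫ ≤
        ‖(↑(Submodule.orthogonalProjectionOnto W v) : EuclideanSpace ℝ (Fin d))‖ := by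
      have h4 := real_inner_le_norm
        (↑(Submodule.orthogonalProjectionOnto W v) : EuclideanSpace ℝ (Fin d)) u
      rwa [hun, mul_one] at h4
    rw [heq, hvu] at hle
    nlinarith [hvn.le]
  have hfdist : (1 - ε) * dist pstar qstar ≤ dist (f pstar) (f qstar) := by
    have h5 : dist (f pstar) (f qstar) =
        ‖(↑(Submodule.orthogonalProjectionOnto W v) : EuclideanSpace ℝ (Fin d))‖ := by
      rw [dist_eq_norm, hf]
      simp only
      have h6 : (↑(Submodule.orthogonalProjectionOnto W pstar) : EuclideanSpace ℝ (Fin d))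
          - ↑(Submodule.orthogonalProjectionOnto W qstar)
          = -(↑(Submodule.orthogonalProjectionOnto W v) : EuclideanSpace ℝ (Fin d)) := by
        rw [hv, map_sub]
        push_cast
        abel
      rw [h6, norm_neg]
    rw [h5, dist_eq_norm, ← norm_neg (pstar - qstar), neg_sub, ← hv]
    exact hπ
  calc (1 - ε) * Metric.diam (↑P : Set (EuclideanSpace ℝ (Fin d)))
      = (1 - ε) * dist pstar qstar := by rw [hdiam]
    _ ≤ dist (f pstar) (f qstar) := hfdist
    _ ≤ Metric.diam (f '' ↑P) := Metric.dist_le_diam_of_mem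
        (hlip.isBounded_image hPb) ⟨pstar, hp, rfl⟩ ⟨qstar, hq, rfl⟩
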